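/- Let α : S ↷ A be an inverse semigroup action on a Banach algebra A and let f, g : S → A satisfy f(t) ∈ I_t and g(t) ∈ I_t for all t ∈ S, with Σ_{t∈S} ‖f(t)‖ < ∞ and Σ_{t∈S} ‖g(t)‖ < ∞. Then: (i) for all s, t ∈ S the element α_s(α_{s*}(f(s)) g(t)) lies in I_{st}; (ii) for each r ∈ S the family (α_s(α_{s*}(f(s)) g(t)))_{(s,t): st = r} is absolutely summable, so (f*g)(r) := Σ_{st=r} α_s(α_{s*}(f(s)) g(t)) is a well-defined element of I_r; and (iii) Σ_{r∈S} ‖(f*g)(r)‖ ≤ (Σ_{s∈S} ‖f(s)‖)(Σ_{t∈S} ‖g(t)‖). -/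

import Mathlib

set_option autoImplicit false

open Filter Topology

/-- An inverse semigroup: every element `t` has a generalized inverse `sInv t`,
which is the unique `w` with `t * w * t = t` and `w * t * w = w`. -/
def IsInvSemigroup (S : Type*) [Semigroup S] (sInv : S → S) : Prop :=
  (∀ t : S, t * sInv t * t = t) ∧ (∀ t : S, sInv t * t * sInv t = sInv t) ∧
    ∀ t w : S, t * w * t = t → w * t * w = w → w = sInv t

/-- An action of an inverse semigroup `S` (with generalized inverse `sInv`) on a
Banach algebra `A` by partial automorphisms `act t : I (sInv t) → I t` between
closed two-sided ideals, satisfying (PA1) and (PA2). -/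
structure InvSemigroupAction (S : Type*) [Semigroup S] (sInv : S → S)
    (A : Type*) [NonUnitalNormedRing A] [NormedSpace ℂ A] where
  /-- the ideals `I t` -/
  I : S → Submodule ℂ A
  /-- the partial automorphisms; only the values on `I (sInv t)` are relevant -/
  act : S → A → A
  ideal_closed : ∀ t, IsClosed (I t : Set A)
  ideal_mul_left : ∀ t (a : A), ∀ x ∈ I t, a * x ∈ I t
  ideal_mul_right : ∀ t (a : A), ∀ x ∈ I t, x * a ∈ I t
  act_mem : ∀ t, ∀ a ∈ I (sInv t), act t a ∈ I t
  act_surjOn : ∀ t, ∀ b ∈ I t, ∃ a ∈ I (sInv t), act t a = b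
  act_add : ∀ t, ∀ a ∈ I (sInv t), ∀ b ∈ I (sInv t), act t (a + b) = act t a + act t b
  act_smul : ∀ t (c : ℂ), ∀ a ∈ I (sInv t), act t (c • a) = c • act t a
  act_mul : ∀ t, ∀ a ∈ I (sInv t), ∀ b ∈ I (sInv t), act t (a * b) = act t a * act t b
  act_norm : ∀ t, ∀ a ∈ I (sInv t), ‖act t a‖ = ‖a‖
  /-- (PA1): `act s ∘ act t = act (s*t)` as partial maps: domains match ... -/
  comp_dom : ∀ s t (a : A), (a ∈ I (sInv t) ∧ act t a ∈ I (sInv s)) ↔ a ∈ I (sInv (s * t))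
  /-- (PA1): ... and values agree on the common domain. -/
  comp_act : ∀ s t, ∀ a ∈ I (sInv (s * t)), act s (act t a) = act (s * t) a
  /-- (PA2): each ideal has a contractive two-sided approximate unit (as a filter/net). -/
  approx_unit : ∀ t, ∃ l : Filter A, l.NeBot ∧ (∀ᶠ x in l, x ∈ I t ∧ ‖x‖ ≤ 1) ∧
    ∀ a ∈ I t, Tendsto (fun x => x * a) l (𝓝 a) ∧ Tendsto (fun x => a * x) l (𝓝 a)
  /-- (PA2): the union of the ideals over idempotents has dense linear span. -/
  dense_span : Dense (↑(Submodule.span ℂ (⋃ e ∈ {e : S | e * e = e}, (I e : Set A))) : Set A)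

/-- The convolution product on `ℓ¹(α)`:
`(f * g)(r) = ∑_{s t = r} α_s(α_{s*}(f s) · g t)`. -/
noncomputable def convVal {S : Type*} [Semigroup S] {sInv : S → S}
    {A : Type*} [NonUnitalNormedRing A] [NormedSpace ℂ A]
    (θ : InvSemigroupAction S sInv A) (f g : S → A) (r : S) : A :=
  ∑' p : {p : S × S // p.1 * p.2 = r},
    θ.act p.1.1 (θ.act (sInv p.1.1) (f p.1.1) * g p.1.2)

/-- the convolution product on `ℓ¹(α)` is well defined:
each summand lies in `I (s*t)`, the defining families are absolutely summable,
`(f*g)(r) ∈ I r`, and `‖f*g‖₁ ≤ ‖f‖₁ ‖g‖₁`. -/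
theorem conv_well_defined
    {S A : Type*} [Semigroup S] [NonUnitalNormedRing A] [NormedSpace ℂ A]
    [CompleteSpace A]
    (sInv : S → S) (hS : IsInvSemigroup S sInv)
    (θ : InvSemigroupAction S sInv A)
    (f g : S → A) (hf : ∀ t, f t ∈ θ.I t) (hg : ∀ t, g t ∈ θ.I t)
    (hf1 : Summable fun t => ‖f t‖) (hg1 : Summable fun t => ‖g t‖) :
    (∀ s t : S, θ.act s (θ.act (sInv s) (f s) * g t) ∈ θ.I (s * t)) ∧
    (∀ r : S,
      Summable (fun p : {p : S × S // p.1 * p.2 = r} =>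
        ‖θ.act p.1.1 (θ.act (sInv p.1.1) (f p.1.1) * g p.1.2)‖) ∧
      convVal θ f g r ∈ θ.I r) ∧
    (Summable fun r => ‖convVal θ f g r‖) ∧
    (∑' r, ‖convVal θ f g r‖) ≤ (∑' s, ‖f s‖) * ∑' t, ‖g t‖ := by
  classical
  obtain ⟨h1, h2, h3⟩ := hS
  have hinv : ∀ t, sInv (sInv t) = t := fun t => (h3 (sInv t) t (h2 t) (h1 t)).symm
  have hfs : ∀ s, f s ∈ θ.I (sInv (sInv s)) := fun s => by rw [hinv]; exact hf s
  -- membership of the inner product in the relevant ideals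
  have hx : ∀ s t : S, θ.act (sInv s) (f s) * g t ∈ θ.I (sInv s) := fun s t =>
    θ.ideal_mul_right _ _ _ (θ.act_mem (sInv s) (f s) (hfs s))
  have hxt : ∀ s t : S, θ.act (sInv s) (f s) * g t ∈ θ.I t := fun s t =>
    θ.ideal_mul_left _ _ _ (hg t)
  -- (i) each summand lies in I (s*t)
  have hmem : ∀ s t : S, θ.act s (θ.act (sInv s) (f s) * g t) ∈ θ.I (s * t) := by
    intro s t
    obtain ⟨y, hy, hyx⟩ := θ.act_surjOn t _ (hxt s t)
    have hy' : y ∈ θ.I (sInv (s * t)) :=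
      (θ.comp_dom s t y).1 ⟨hy, by rw [hyx]; exact hx s t⟩
    rw [← hyx, θ.comp_act s t y hy']
    exact θ.act_mem _ _ hy'
  -- norm estimate for each summand
  have hnorm : ∀ s t : S, ‖θ.act s (θ.act (sInv s) (f s) * g t)‖ ≤ ‖f s‖ * ‖g t‖ := by
    intro s t
    rw [θ.act_norm s _ (hx s t)]
    calc ‖θ.act (sInv s) (f s) * g t‖ ≤ ‖θ.act (sInv s) (f s)‖ * ‖g t‖ := norm_mul_le _ _
      _ = ‖f s‖ * ‖g t‖ := by rw [θ.act_norm (sInv s) (f s) (hfs s)]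
  -- the dominating family on S × S
  set F : S × S → ℝ := fun p => ‖f p.1‖ * ‖g p.2‖ with hFdef
  have hF : Summable F :=
    hf1.mul_of_nonneg hg1 (fun _ => norm_nonneg _) (fun _ => norm_nonneg _)
  have hFhs : HasSum F ((∑' s, ‖f s‖) * ∑' t, ‖g t‖) := by
    have := Summable.tsum_mul_tsum hf1 hg1 hF
    rw [this]
    exact hF.hasSum
  -- fiberwise summability and domination
  have hFr : ∀ r : S, Summable (fun p : {p : S × S // p.1 * p.2 = r} => F p.1) :=
    fun r => hF.subtype _
  have hNr : ∀ r : S, Summable (fun p : {p : S × S // p.1 * p.2 = r} =>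
      ‖θ.act p.1.1 (θ.act (sInv p.1.1) (f p.1.1) * g p.1.2)‖) := by
    intro r
    exact (hFr r).of_nonneg_of_le (fun _ => norm_nonneg _) (fun p => hnorm p.1.1 p.1.2)
  have hSr : ∀ r : S, Summable (fun p : {p : S × S // p.1 * p.2 = r} =>
      θ.act p.1.1 (θ.act (sInv p.1.1) (f p.1.1) * g p.1.2)) := fun r => (hNr r).of_norm
  -- (ii) convVal r ∈ I r
  have hconvmem : ∀ r : S, convVal θ f g r ∈ θ.I r := by
    intro r
    refine (θ.ideal_closed r).mem_of_tendsto (hSr r).hasSum (Filter.Eventually.of_forall ?_)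
    intro u
    refine Submodule.sum_mem _ (fun p _ => ?_)
    have := hmem p.1.1 p.1.2
    rwa [p.2] at this
  -- the fiberwise dominating sums
  set G : S → ℝ := fun r => ∑' p : {p : S × S // p.1 * p.2 = r}, F p.1 with hGdef
  have hGhs : HasSum G ((∑' s, ‖f s‖) * ∑' t, ‖g t‖) := by
    have h := hFhs.tsum_fiberwise (fun p : S × S => p.1 * p.2)
    convert h using 2
    all_goals rfl
  have hGle : ∀ r : S, ‖convVal θ f g r‖ ≤ G r := by
    intro r
    refine (norm_tsum_le_tsum_norm (hNr r)).trans ?_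
    exact Summable.tsum_le_tsum (fun p => hnorm p.1.1 p.1.2) (hNr r) (hFr r)
  have hGnn : ∀ r : S, 0 ≤ G r := fun r => tsum_nonneg (fun p => by
    exact mul_nonneg (norm_nonneg _) (norm_nonneg _))
  have hsumconv : Summable (fun r => ‖convVal θ f g r‖) :=
    hGhs.summable.of_nonneg_of_le (fun _ => norm_nonneg _) hGle
  refine ⟨hmem, fun r => ⟨hNr r, hconvmem r⟩, hsumconv, ?_⟩
  calc (∑' r, ‖convVal θ f g r‖) ≤ ∑' r, G r :=
        Summable.tsum_le_tsum hGle hsumconv hGhs.summable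
    _ = (∑' s, ‖f s‖) * ∑' t, ‖g t‖ := hGhs.tsum_eq
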